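/- arXiv:1710.06355 — 2 statements merged into one kernel-verified Lean document; each statement's English description precedes it below -/
import Mathlib

section
/- The signed measure μ^{(1)}_α on R with density x ↦ (x^2 - 2x(α+1) + (α^2+1)) / (2απ·sqrt((b-x)(x-a))) on the interval (a,b), where a = (1-√α)^2 and b = (1+√α)^2 and α > 0, has total mass zero: the integral over (a,b) of this density equals 0. -/
theorem mu1_total_mass_zero (α : ℝ) (hα : 0 < α) :
    ∫ x in ((1 - Real.sqrt α) ^ 2)..((1 + Real.sqrt α) ^ 2),
      (x ^ 2 - 2 * x * (α + 1) + α ^ 2 + 1) /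
        Real.sqrt (((1 + Real.sqrt α) ^ 2 - x) * (x - (1 - Real.sqrt α) ^ 2)) = 0 := by
  set s := Real.sqrt α with hs_def
  have hs0 : 0 ≤ s := Real.sqrt_nonneg α
  have hs2 : s ^ 2 = α := Real.sq_sqrt hα.le
  set a := (1 - s) ^ 2 with ha_def
  set b := (1 + s) ^ 2 with hb_def
  have hab : a ≤ b := by nlinarith
  set f' : ℝ → ℝ := fun x =>
    (x ^ 2 - 2 * x * (α + 1) + α ^ 2 + 1) / Real.sqrt ((b - x) * (x - a)) with hf'
  set F : ℝ → ℝ := fun x => -((x - (1 + α)) / 2) * Real.sqrt ((b - x) * (x - a)) with hF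
  by_cases hInt : IntervalIntegrable f' MeasureTheory.volume a b
  · have hcont : ContinuousOn F (Set.Icc a b) := by
      apply Continuous.continuousOn; fun_prop
    have hderiv : ∀ x ∈ Set.Ioo a b, HasDerivAt F (f' x) x := by
      intro x hx
      have hpos : 0 < (b - x) * (x - a) :=
        mul_pos (by linarith [hx.2]) (by linarith [hx.1])
      have hS : 0 < Real.sqrt ((b - x) * (x - a)) := Real.sqrt_pos.mpr hpos
      have hS2 : Real.sqrt ((b - x) * (x - a)) ^ 2 = (b - x) * (x - a) :=
        Real.sq_sqrt hpos.le
      have h1 : HasDerivAt (fun y : ℝ => (b - y) * (y - a))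
          (-1 * (x - a) + (b - x) * 1) x :=
        ((hasDerivAt_id x).const_sub b).mul ((hasDerivAt_id x).sub_const a)
      have h2 : HasDerivAt (fun y : ℝ => Real.sqrt ((b - y) * (y - a)))
          (1 / (2 * Real.sqrt ((b - x) * (x - a))) * (-1 * (x - a) + (b - x) * 1)) x :=
        (Real.hasDerivAt_sqrt hpos.ne').comp x h1
      have h3 : HasDerivAt (fun y : ℝ => -((y - (1 + α)) / 2)) (-(1 / 2)) x := by
        exact ((((hasDerivAt_id x).sub_const (1 + α)).div_const 2).neg).congr_deriv (by norm_num)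
      have h4 := h3.mul h2
      convert h4 using 1
      case e'_4 => rfl
      case e'_5 => rfl
      case e'_8 => rfl
      rw [hf']
      rw [ha_def, hb_def] at hS2 ⊢
      beta_reduce
      set T := Real.sqrt (((1 + s) ^ 2 - x) * (x - (1 - s) ^ 2)) with hT
      have hT0 : 0 < T := Real.sqrt_pos.mpr hpos
      field_simp
      linear_combination 2 * hS2 + (6 * x - 2 * s ^ 2 + 2 - 4 * α) * hs2
    rw [intervalIntegral.integral_eq_sub_of_hasDerivAt_of_le hab hcont hderiv hInt]
    simp [hF, sub_self]
  · exact intervalIntegral.integral_undef hInt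
end

section
/- Let F and F' be the cumulative distribution functions of the empirical spectral measures of two n×n real symmetric matrices M and M'. Then ||F - F'||_∞ ≤ rank(M - M')/n. -/
set_option maxHeartbeats 1000000

open Finset Module Submodule

local notation "⟪" x ", " y "⟫" => @inner ℝ _ _ x y

section QF
variable {n : ℕ} (B : OrthonormalBasis (Fin n) ℝ (EuclideanSpace ℝ (Fin n)))
  (lam : Fin n → ℝ) (T : EuclideanSpace ℝ (Fin n) →ₗ[ℝ] EuclideanSpace ℝ (Fin n))

lemma qf_eq (hT : ∀ i, T (B i) = lam i • B i) (v : EuclideanSpace ℝ (Fin n)) :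
    ⟪v, T v⟫ = ∑ i, lam i * (B.repr v i)^2 := by
  have hTv : T v = ∑ i, (lam i * B.repr v i) • B i := by
    conv_lhs => rw [← B.sum_repr v]
    rw [map_sum]
    simp [hT, smul_smul, mul_comm]
  rw [hTv, inner_sum]
  refine Finset.sum_congr rfl fun i _ => ?_
  rw [real_inner_smul_right, real_inner_comm, ← B.repr_apply_apply]
  ring

lemma norm_sq_eq (v : EuclideanSpace ℝ (Fin n)) :
    ⟪v, v⟫ = ∑ i, (B.repr v i)^2 := by
  have := qf_eq B (fun _ => 1) LinearMap.id (by simp) v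
  simpa using this
end QF

section Main
variable {n : ℕ}

lemma repr_eq_zero_of_mem_span {B : OrthonormalBasis (Fin n) ℝ (EuclideanSpace ℝ (Fin n))}
    {S : Set (Fin n)} {v : EuclideanSpace ℝ (Fin n)}
    (hv : v ∈ span ℝ (B '' S)) {i : Fin n} (hi : i ∉ S) : B.repr v i = 0 := by
  have h : v ∈ span ℝ (⇑B.toBasis '' S) := by rwa [B.coe_toBasis]
  rw [Basis.mem_span_image] at h
  rw [← B.coe_toBasis_repr_apply]
  by_contra hne
  exact hi (h (Finsupp.mem_support_iff.2 hne))

lemma finrank_span_ge (B : OrthonormalBasis (Fin n) ℝ (EuclideanSpace ℝ (Fin n)))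
    (S : Finset (Fin n)) : S.card ≤ finrank ℝ (span ℝ (B '' (S : Set (Fin n)))) := by
  classical
  have hli : LinearIndependent ℝ fun i : S => B (i : Fin n) :=
    B.orthonormal.linearIndependent.comp _ Subtype.coe_injective
  have hmem : ∀ i : S, B (i : Fin n) ∈ span ℝ (B '' (S : Set (Fin n))) := fun i =>
    subset_span ⟨i, i.2, rfl⟩
  have hli2 : LinearIndependent ℝ fun i : S =>
      (⟨B (i : Fin n), hmem i⟩ : span ℝ (B '' (S : Set (Fin n)))) := by
    apply LinearIndependent.of_comp (span ℝ (B '' (S : Set (Fin n)))).subtype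
    exact hli
  simpa using hli2.fintype_card_le_finrank

lemma finrank_ker_ge (A : Matrix (Fin n) (Fin n) ℝ) :
    n ≤ finrank ℝ (LinearMap.ker (Matrix.toEuclideanLin A)) + A.rank := by
  classical
  have hcomp : Matrix.toEuclideanLin A =
      ((WithLp.linearEquiv 2 ℝ (Fin n → ℝ)).symm.toLinearMap.comp
        (A.mulVecLin.comp (WithLp.linearEquiv 2 ℝ (Fin n → ℝ)).toLinearMap)) := rfl
  have hrange : finrank ℝ (LinearMap.range (Matrix.toEuclideanLin A)) = A.rank := by
    rw [hcomp, LinearMap.range_comp, LinearMap.range_comp, LinearEquiv.range,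
      Submodule.map_top]
    rw [LinearEquiv.finrank_map_eq]
    rfl
  have := LinearMap.finrank_range_add_finrank_ker (Matrix.toEuclideanLin A)
  rw [hrange] at this
  simp only [finrank_euclideanSpace, Fintype.card_fin] at this
  omega
end Main

section Count
variable {n : ℕ} (M M' : Matrix (Fin n) (Fin n) ℝ)

lemma toEuclideanLin_eigen (hM : M.IsHermitian) (i : Fin n) :
    Matrix.toEuclideanLin M (hM.eigenvectorBasis i) =
      hM.eigenvalues i • hM.eigenvectorBasis i :=
  congrArg (WithLp.equiv 2 (Fin n → ℝ)).symm (hM.mulVec_eigenvectorBasis i)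

lemma count_le (hM : M.IsHermitian) (hM' : M'.IsHermitian) (x : ℝ) :
    (Finset.univ.filter (fun i => hM.eigenvalues i ≤ x)).card ≤
      (Finset.univ.filter (fun i => hM'.eigenvalues i ≤ x)).card + (M - M').rank := by
  classical
  set B := hM.eigenvectorBasis with hB
  set B' := hM'.eigenvectorBasis with hB'
  set S : Finset (Fin n) := Finset.univ.filter (fun i => hM.eigenvalues i ≤ x) with hS
  set S' : Finset (Fin n) := Finset.univ.filter (fun i => ¬ hM'.eigenvalues i ≤ x) with hS'
  set V : Submodule ℝ (EuclideanSpace ℝ (Fin n)) := span ℝ (B '' (S : Set (Fin n))) with hV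
  set W : Submodule ℝ (EuclideanSpace ℝ (Fin n)) := span ℝ (B' '' (S' : Set (Fin n))) with hW
  set K := LinearMap.ker (Matrix.toEuclideanLin (M - M')) with hK
  -- triviality of the triple intersection
  have htriv : V ⊓ W ⊓ K = ⊥ := by
    rw [Submodule.eq_bot_iff]
    rintro v ⟨⟨hvV, hvW⟩, hvK⟩
    by_contra hvne
    have hMM' : Matrix.toEuclideanLin M v = Matrix.toEuclideanLin M' v := by
      have h0 : Matrix.toEuclideanLin (M - M') v = 0 := hvK
      rw [map_sub, LinearMap.sub_apply, sub_eq_zero] at h0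
      exact h0
    have h1 : ⟪v, Matrix.toEuclideanLin M v⟫ = ∑ i, hM.eigenvalues i * (B.repr v i)^2 :=
      qf_eq B hM.eigenvalues _ (toEuclideanLin_eigen M hM) v
    have h2 : ⟪v, Matrix.toEuclideanLin M' v⟫ = ∑ i, hM'.eigenvalues i * (B'.repr v i)^2 :=
      qf_eq B' hM'.eigenvalues _ (toEuclideanLin_eigen M' hM') v
    have hn1 : ⟪v, v⟫ = ∑ i, (B.repr v i)^2 := norm_sq_eq B v
    have hn2 : ⟪v, v⟫ = ∑ i, (B'.repr v i)^2 := norm_sq_eq B' v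
    have hle : ∑ i, hM.eigenvalues i * (B.repr v i)^2 ≤ x * ∑ i, (B.repr v i)^2 := by
      rw [Finset.mul_sum]
      apply Finset.sum_le_sum
      intro i _
      by_cases hi : hM.eigenvalues i ≤ x
      · nlinarith [sq_nonneg (B.repr v i)]
      · have : B.repr v i = 0 := repr_eq_zero_of_mem_span hvV (by simp [hS, hi])
        simp [this]
    have hgt : x * ∑ i, (B'.repr v i)^2 < ∑ i, hM'.eigenvalues i * (B'.repr v i)^2 := by
      rw [← sub_pos, Finset.mul_sum, ← Finset.sum_sub_distrib]
      have hterm : ∀ i ∈ Finset.univ,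
          0 ≤ hM'.eigenvalues i * (B'.repr v i)^2 - x * (B'.repr v i)^2 := by
        intro i _
        by_cases hi : hM'.eigenvalues i ≤ x
        · have : B'.repr v i = 0 := repr_eq_zero_of_mem_span hvW (by simp [hS', hi])
          simp [this]
        · nlinarith [sq_nonneg (B'.repr v i)]
      have hex : ∃ i ∈ Finset.univ,
          0 < hM'.eigenvalues i * (B'.repr v i)^2 - x * (B'.repr v i)^2 := by
        have : ∃ i, B'.repr v i ≠ 0 := by
          by_contra hall
          push_neg at hall
          apply hvne
          have : B'.repr v = 0 := by ext i; exact hall i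
          simpa using B'.repr.injective (by simp [this])
        obtain ⟨i, hi⟩ := this
        have hiS : ¬ hM'.eigenvalues i ≤ x := by
          by_contra hx
          exact hi (repr_eq_zero_of_mem_span hvW (by simp [hS', hx]))
        exact ⟨i, Finset.mem_univ i, by nlinarith [sq_nonneg (B'.repr v i), pow_pos (abs_pos.2 hi) 2, sq_abs (B'.repr v i)]⟩
      obtain ⟨i, hiu, hip⟩ := hex
      exact Finset.sum_pos' hterm ⟨i, hiu, hip⟩
    have hsum : ∑ i, hM.eigenvalues i * (B.repr v i)^2
        = ∑ i, hM'.eigenvalues i * (B'.repr v i)^2 := by rw [← h1, ← h2, hMM']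
    have hnn : (∑ i, (B.repr v i)^2) = ∑ i, (B'.repr v i)^2 := by rw [← hn1, ← hn2]
    rw [hnn] at hle
    linarith
  -- dimension counting
  have ha : S.card ≤ finrank ℝ V := finrank_span_ge B S
  have hb : S'.card ≤ finrank ℝ W := finrank_span_ge B' S'
  have hker : n ≤ finrank ℝ K + (M - M').rank := finrank_ker_ge (M - M')
  have h1 := Submodule.finrank_sup_add_finrank_inf_eq V W
  have h2 := Submodule.finrank_sup_add_finrank_inf_eq (V ⊓ W) K
  have htop : ∀ U : Submodule ℝ (EuclideanSpace ℝ (Fin n)), finrank ℝ U ≤ n := by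
    intro U
    simpa using U.finrank_le
  have h1' := htop (V ⊔ W)
  have h2' := htop ((V ⊓ W) ⊔ K)
  rw [htriv, finrank_bot] at h2
  have hSS' : S.card ≤ n := by simpa using S.card_le_univ
  have hcard : (Finset.univ.filter (fun i => hM'.eigenvalues i ≤ x)).card + S'.card = n := by
    simpa [hS'] using Finset.card_filter_add_card_filter_not
      (s := (Finset.univ : Finset (Fin n))) (p := fun i => hM'.eigenvalues i ≤ x)
  omega

lemma rank_sub_comm : (M - M').rank = (M' - M).rank := by
  rw [← neg_sub M M']
  unfold Matrix.rank
  have : (-(M - M')).mulVecLin = -(M - M').mulVecLin :=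
    LinearMap.ext fun v => by simp [Matrix.neg_mulVec, Matrix.sub_mulVec, neg_sub]
  rw [this, LinearMap.range_neg]
end Count

/-- CDF of the empirical spectral distribution of a real symmetric matrix. -/
noncomputable def esdCDF {n : ℕ} {M : Matrix (Fin n) (Fin n) ℝ}
    (hM : M.IsHermitian) (x : ℝ) : ℝ :=
  (Finset.univ.filter (fun i => hM.eigenvalues i ≤ x)).card / n

theorem rank_inequality_esd (n : ℕ) (hn : 0 < n) (M M' : Matrix (Fin n) (Fin n) ℝ)
    (hM : M.IsHermitian) (hM' : M'.IsHermitian) (x : ℝ) :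
    |esdCDF hM x - esdCDF hM' x| ≤ ((M - M').rank : ℝ) / n := by
  have h1 := count_le M M' hM hM' x
  have h2 := count_le M' M hM' hM x
  rw [← rank_sub_comm M M'] at h2
  unfold esdCDF
  have hn' : (0:ℝ) < n := by exact_mod_cast hn
  rw [abs_sub_le_iff, div_sub_div_same, div_sub_div_same, div_le_div_iff₀ hn' hn',
    div_le_div_iff₀ hn' hn']
  have h1' : ((Finset.univ.filter (fun i => hM.eigenvalues i ≤ x)).card : ℝ) ≤
      ((Finset.univ.filter (fun i => hM'.eigenvalues i ≤ x)).card : ℝ) + ((M - M').rank : ℝ) := by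
    exact_mod_cast h1
  have h2' : ((Finset.univ.filter (fun i => hM'.eigenvalues i ≤ x)).card : ℝ) ≤
      ((Finset.univ.filter (fun i => hM.eigenvalues i ≤ x)).card : ℝ) + ((M - M').rank : ℝ) := by
    exact_mod_cast h2
  constructor <;> nlinarith [h1', h2', hn']
end
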